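/- (Weissinger fixed point theorem) Let (M, d) be a nonempty complete metric space and Ψ : M → M a map. Suppose (α_n)_{n≥0} is a sequence of nonnegative reals with ∑_{n=0}^∞ α_n < ∞ such that d(Ψⁿ u, Ψⁿ v) ≤ α_n d(u, v) for all u, v ∈ M and all n ≥ 0. Then Ψ has a unique fixed point u* ∈ M, and for every u ∈ M, Ψⁿ u → u* with d(Ψⁿ u, u*) ≤ (∑_{k=n}^∞ α_k) d(Ψ u, u). -/

import Mathlib

open Filter Topology

/-- Weissinger's fixed point theorem. -/
theorem weissinger_fixed_point {M : Type*} [MetricSpace M] [CompleteSpace M]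
    [Nonempty M] (Ψ : M → M) (α : ℕ → ℝ) (hα_nonneg : ∀ n, 0 ≤ α n)
    (hα_sum : Summable α)
    (hΨ : ∀ (n : ℕ) (u v : M), dist (Ψ^[n] u) (Ψ^[n] v) ≤ α n * dist u v) :
    ∃ ustar : M, Ψ ustar = ustar ∧ (∀ v : M, Ψ v = v → v = ustar) ∧
      (∀ u : M, Tendsto (fun n => Ψ^[n] u) atTop (𝓝 ustar)) ∧
      ∀ (u : M) (n : ℕ),
        dist (Ψ^[n] u) ustar ≤ (∑' k : ℕ, α (n + k)) * dist (Ψ u) u := by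
  have hα0 : Tendsto α atTop (𝓝 0) := hα_sum.tendsto_atTop_zero
  have hcont : Continuous Ψ := by
    refine (LipschitzWith.of_dist_le_mul (K := ⟨α 1, hα_nonneg 1⟩) ?_).continuous
    intro x y
    exact (by simpa using hΨ 1 x y : dist (Ψ x) (Ψ y) ≤ α 1 * dist x y)
  obtain ⟨u0⟩ : Nonempty M := inferInstance
  -- the iterates of u0 form a Cauchy sequence
  have key : ∀ (u : M) (n : ℕ), dist (Ψ^[n] u) (Ψ^[n+1] u) ≤ α n * dist u (Ψ u) := by
    intro u n
    rw [Function.iterate_succ_apply]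
    exact hΨ n u (Ψ u)
  have hc : CauchySeq (fun n => Ψ^[n] u0) := by
    refine cauchySeq_of_dist_le_of_summable (fun n => α n * dist u0 (Ψ u0)) ?_ ?_
    · intro n; exact key u0 n
    · exact hα_sum.mul_right _
  obtain ⟨ustar, hlim⟩ := cauchySeq_tendsto_of_complete hc
  have hfix : Ψ ustar = ustar := by
    have h1 : Tendsto (fun n => Ψ (Ψ^[n] u0)) atTop (𝓝 (Ψ ustar)) :=
      (hcont.tendsto ustar).comp hlim
    have h2 : Tendsto (fun n => Ψ (Ψ^[n] u0)) atTop (𝓝 ustar) := by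
      have := hlim.comp (tendsto_add_atTop_nat 1)
      simpa [Function.comp_def, Function.iterate_succ_apply'] using this
    exact tendsto_nhds_unique h1 h2
  have hdzero : ∀ u : M, Tendsto (fun n => Ψ^[n] u) atTop (𝓝 ustar) := by
    intro u
    have hb : ∀ n, dist (Ψ^[n] u) ustar ≤ α n * dist u ustar := by
      intro n
      have := hΨ n u ustar
      rwa [Function.iterate_fixed hfix n] at this
    have h0 : Tendsto (fun n => α n * dist u ustar) atTop (𝓝 0) := by
      simpa using hα0.mul_const (dist u ustar)
    rw [tendsto_iff_dist_tendsto_zero]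
    exact squeeze_zero (fun n => dist_nonneg) hb h0
  refine ⟨ustar, hfix, ?_, hdzero, ?_⟩
  · intro v hv
    have hb : ∀ n, dist v ustar ≤ α n * dist v ustar := by
      intro n
      have := hΨ n v ustar
      rwa [Function.iterate_fixed hv n, Function.iterate_fixed hfix n] at this
    by_contra hne
    have hd : 0 < dist v ustar := dist_pos.mpr hne
    obtain ⟨n, hn⟩ := (hα0.eventually (gt_mem_nhds (by linarith : (1:ℝ)/2 > 0))).exists
    have := hb n
    nlinarith
  · intro u n
    -- finite estimate
    have hfin : ∀ m, dist (Ψ^[n] u) (Ψ^[n+m] u) ≤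
        (∑ k ∈ Finset.range m, α (n + k)) * dist u (Ψ u) := by
      intro m
      induction m with
      | zero => simp
      | succ m ih =>
        calc dist (Ψ^[n] u) (Ψ^[n+(m+1)] u)
            ≤ dist (Ψ^[n] u) (Ψ^[n+m] u) + dist (Ψ^[n+m] u) (Ψ^[n+m+1] u) := by
              rw [show n + (m+1) = n + m + 1 by ring]; exact dist_triangle _ _ _
          _ ≤ (∑ k ∈ Finset.range m, α (n + k)) * dist u (Ψ u)
              + α (n + m) * dist u (Ψ u) := add_le_add ih (key u (n+m))
          _ = (∑ k ∈ Finset.range (m+1), α (n + k)) * dist u (Ψ u) := by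
              rw [Finset.sum_range_succ, add_mul]
    have hsum : Summable (fun k => α (n + k)) := by
      simpa [Nat.add_comm] using (summable_nat_add_iff n).mpr hα_sum
    have hbound : ∀ m, dist (Ψ^[n] u) (Ψ^[n+m] u) ≤
        (∑' k : ℕ, α (n + k)) * dist u (Ψ u) := by
      intro m
      refine (hfin m).trans (mul_le_mul_of_nonneg_right ?_ dist_nonneg)
      exact Summable.sum_le_tsum _ (fun k _ => hα_nonneg _) hsum
    have hlim2 : Tendsto (fun m => dist (Ψ^[n] u) (Ψ^[n+m] u)) atTop
        (𝓝 (dist (Ψ^[n] u) ustar)) := by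
      have : Tendsto (fun m => Ψ^[n+m] u) atTop (𝓝 ustar) := by
        have := (hdzero u).comp (tendsto_add_atTop_nat n)
        simpa [Function.comp_def, Nat.add_comm] using this
      exact (Continuous.tendsto (continuous_const.dist continuous_id) ustar).comp this
    have := le_of_tendsto hlim2 (Eventually.of_forall hbound)
    calc dist (Ψ^[n] u) ustar ≤ (∑' k : ℕ, α (n + k)) * dist u (Ψ u) := this
      _ = (∑' k : ℕ, α (n + k)) * dist (Ψ u) u := by rw [dist_comm]
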